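/- arXiv:1405.6905 — 3 statements merged into one kernel-verified Lean document; each statement's English description precedes it below -/
import Mathlib

section
/- Let T be a real n×n matrix and let |T| denote the matrix of entrywise absolute values of T. If the spectral radius of |T| is strictly less than 1, then there exists a vector M ∈ ℝⁿ with all entries strictly positive such that every entry of (I − |T|ᵀ)·M is strictly positive. -/
open Matrix

attribute [local instance] Matrix.linftyOpNormedRing Matrix.linftyOpNormedAlgebra

lemma pow_entry_nonneg {n : ℕ} {A : Matrix (Fin n) (Fin n) ℝ} (hA : ∀ i j, 0 ≤ A i j)
    (k : ℕ) : ∀ i j, 0 ≤ (A ^ k) i j := by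
  induction k with
  | zero =>
    intro i j
    rw [pow_zero]
    by_cases h : i = j <;> simp [Matrix.one_apply, h]
  | succ k ih =>
    intro i j
    rw [pow_succ, Matrix.mul_apply]
    exact Finset.sum_nonneg fun l _ => mul_nonneg (ih i l) (hA l j)

lemma spectrum_transpose {n : ℕ} (A : Matrix (Fin n) (Fin n) ℂ) :
    spectrum ℂ Aᵀ = spectrum ℂ A := by
  ext x
  simp only [spectrum.mem_iff, not_iff_not, Matrix.isUnit_iff_isUnit_det]
  have : (algebraMap ℂ (Matrix (Fin n) (Fin n) ℂ) x - Aᵀ) =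
      (algebraMap ℂ (Matrix (Fin n) (Fin n) ℂ) x - A)ᵀ := by
    rw [Matrix.transpose_sub]
    congr 1
    rw [Matrix.algebraMap_eq_diagonal, Matrix.diagonal_transpose]
  rw [this, Matrix.det_transpose]

lemma spectralRadius_transpose {n : ℕ} (A : Matrix (Fin n) (Fin n) ℂ) :
    spectralRadius ℂ Aᵀ = spectralRadius ℂ A := by
  unfold spectralRadius
  rw [spectrum_transpose]

/-- If the spectral radius of the entrywise absolute value `|T|` of a real
`n × n` matrix `T` is strictly less than `1`, then there is an entrywise strictly positive
vector `M` such that `(I - |T|ᵀ) *ᵥ M` is entrywise strictly positive. -/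
theorem stmt0 (n : ℕ) (T : Matrix (Fin n) (Fin n) ℝ)
    (h : spectralRadius ℂ ((T.map fun x => |x|).map Complex.ofReal) < 1) :
    ∃ M : Fin n → ℝ, (∀ i, 0 < M i) ∧
      ∀ i, 0 < (((1 : Matrix (Fin n) (Fin n) ℝ) - (T.map fun x => |x|)ᵀ) *ᵥ M) i := by
  set A : Matrix (Fin n) (Fin n) ℝ := T.map fun x => |x| with hAdef
  have hA : ∀ i j, 0 ≤ A i j := fun i j => abs_nonneg _
  set B : Matrix (Fin n) (Fin n) ℝ := Aᵀ with hBdef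
  have hB : ∀ i j, 0 ≤ B i j := fun i j => hA j i
  set Bc : Matrix (Fin n) (Fin n) ℂ := B.map Complex.ofReal with hBcdef
  -- spectral radius of Bc is < 1
  have hBc : spectralRadius ℂ Bc < 1 := by
    have : Bc = ((A.map Complex.ofReal))ᵀ := by
      rw [hBcdef, hBdef, Matrix.transpose_map]
    rw [this, spectralRadius_transpose]
    exact h
  -- Gelfand's formula gives some k ≥ 1 with ‖Bc ^ k‖₊ < 1
  have hG := spectrum.pow_nnnorm_pow_one_div_tendsto_nhds_spectralRadius Bc
  have hev : ∀ᶠ k : ℕ in Filter.atTop,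
      (‖Bc ^ k‖₊ : ENNReal) ^ (1 / (k : ℝ)) < 1 :=
    hG.eventually_lt_const hBc
  obtain ⟨k, hklt, hk1⟩ := (hev.and (Filter.eventually_ge_atTop 1)).exists
  have hknorm : ‖Bc ^ k‖₊ < 1 := by
    by_contra hcon
    push_neg at hcon
    have h1 : (1 : ENNReal) ≤ (‖Bc ^ k‖₊ : ENNReal) ^ (1 / (k : ℝ)) := by
      calc (1 : ENNReal) = 1 ^ (1 / (k : ℝ)) := (ENNReal.one_rpow _).symm
        _ ≤ (‖Bc ^ k‖₊ : ENNReal) ^ (1 / (k : ℝ)) := by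
            apply ENNReal.rpow_le_rpow _ (by positivity)
            exact_mod_cast hcon
    exact absurd hklt (not_lt.mpr h1)
  -- the real norm bound
  have hknorm' : ‖Bc ^ k‖ < 1 := hknorm
  -- Bc ^ k is the complexification of B ^ k
  have hpow : Bc ^ k = (B ^ k).map Complex.ofReal := by
    have := map_pow (Complex.ofRealHom.mapMatrix :
      Matrix (Fin n) (Fin n) ℝ →+* Matrix (Fin n) (Fin n) ℂ) B k
    exact this.symm
  -- row sums of B ^ k are < 1
  have hrow : ∀ i, ∑ j, (B ^ k) i j < 1 := by
    intro i
    have h1 : ∑ j, (B ^ k) i j = ∑ j, ‖(Bc ^ k) i j‖ := by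
      rw [hpow]
      refine Finset.sum_congr rfl fun j _ => ?_
      simp only [Matrix.map_apply, Complex.norm_real, Real.norm_eq_abs]
      exact (abs_of_nonneg (pow_entry_nonneg hB k i j)).symm
    have h2 : ∑ j, ‖(Bc ^ k) i j‖ ≤ ‖Bc ^ k‖ := by
      rw [Matrix.linfty_opNorm_def]
      have : (∑ j, ‖(Bc ^ k) i j‖₊ : NNReal) ≤
          (Finset.univ : Finset (Fin n)).sup fun i => ∑ j, ‖(Bc ^ k) i j‖₊ :=
        Finset.le_sup (f := fun i => ∑ j, ‖(Bc ^ k) i j‖₊) (Finset.mem_univ i)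
      calc ∑ j, ‖(Bc ^ k) i j‖ = ((∑ j, ‖(Bc ^ k) i j‖₊ : NNReal) : ℝ) := by
            push_cast; rfl
        _ ≤ _ := by exact_mod_cast this
    linarith [h1 ▸ h2]
  -- the candidate vector
  set S : Matrix (Fin n) (Fin n) ℝ := ∑ i ∈ Finset.range k, B ^ i with hSdef
  refine ⟨S *ᵥ (fun _ => 1), ?_, ?_⟩
  · intro i
    have hexp : (S *ᵥ (fun _ => 1)) i = ∑ l ∈ Finset.range k, ((B ^ l) *ᵥ (fun _ => 1)) i := by
      simp only [Matrix.mulVec, dotProduct, Finset.sum_apply, mul_one]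
      rw [Finset.sum_comm]
      exact Finset.sum_congr rfl fun j _ => by rw [hSdef, Matrix.sum_apply]
    rw [hexp]
    have h0mem : (0 : ℕ) ∈ Finset.range k := Finset.mem_range.mpr hk1
    have hterm0 : ((B ^ 0) *ᵥ (fun _ => 1)) i = 1 := by
      simp [pow_zero, Matrix.one_mulVec]
    calc (0 : ℝ) < 1 := one_pos
      _ = ((B ^ 0) *ᵥ (fun _ => 1)) i := hterm0.symm
      _ ≤ ∑ l ∈ Finset.range k, ((B ^ l) *ᵥ (fun _ => 1)) i := by
          apply Finset.single_le_sum (f := fun l => ((B ^ l) *ᵥ (fun _ => 1 : Fin n → ℝ)) i)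
            _ h0mem
          intro l _
          simp only [Matrix.mulVec, dotProduct, mul_one]
          exact Finset.sum_nonneg fun j _ => pow_entry_nonneg hB l i j
  · intro i
    have hgeom : ((1 : Matrix (Fin n) (Fin n) ℝ) - B) * S = 1 - B ^ k := by
      have := mul_geom_sum B k
      have h2 : ((B - 1) * S) = B ^ k - 1 := this
      calc ((1 : Matrix (Fin n) (Fin n) ℝ) - B) * S = -((B - 1) * S) := by
            rw [← neg_mul, neg_sub]
        _ = -(B ^ k - 1) := by rw [h2]
        _ = 1 - B ^ k := neg_sub _ _
    have : ((1 : Matrix (Fin n) (Fin n) ℝ) - B) *ᵥ (S *ᵥ (fun _ => 1)) =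
        ((1 : Matrix (Fin n) (Fin n) ℝ) - B ^ k) *ᵥ (fun _ => 1) := by
      rw [Matrix.mulVec_mulVec, hgeom]
    rw [hBdef] at this
    rw [this]
    rw [Matrix.sub_mulVec, Matrix.one_mulVec]
    have : ((B ^ k) *ᵥ (fun _ => 1)) i = ∑ j, (B ^ k) i j := by
      simp [Matrix.mulVec, dotProduct]
    simp only [Pi.sub_apply, this]
    linarith [hrow i]
end

section
/- Let C_q > 0 and let Q and Q̃ be m×m real symmetric positive definite matrices all of whose diagonal entries are at least C_q. Let R = diag(Q)^{−1/2} Q diag(Q)^{−1/2} and R̃ = diag(Q̃)^{−1/2} Q̃ diag(Q̃)^{−1/2}. Then ‖R − R̃‖_s ≤ ((2m+1)/C_q) · ‖Q − Q̃‖_s. -/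
open Matrix

/-- The Euclidean norm `‖x‖₂` on `ℝ^m`. -/
noncomputable def e2 {m : ℕ} (x : Fin m → ℝ) : ℝ := Real.sqrt (∑ i, x i ^ 2)

/-- The spectral norm of a real `m × m` matrix: the operator norm induced by the
Euclidean norm, `‖M‖_s = sup_{x ≠ 0} ‖M x‖₂ / ‖x‖₂`. -/
noncomputable def specNorm {m : ℕ} (M : Matrix (Fin m) (Fin m) ℝ) : ℝ :=
  sSup ((fun x => e2 (M *ᵥ x) / e2 x) '' {x | x ≠ 0})

/-- The correlation matrix associated with a positive definite matrix `Q`: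
`corr Q = diag(Q)^{-1/2} * Q * diag(Q)^{-1/2}`. -/
noncomputable def corr {m : ℕ} (Q : Matrix (Fin m) (Fin m) ℝ) : Matrix (Fin m) (Fin m) ℝ :=
  Matrix.diagonal (fun i => (Real.sqrt (Q i i))⁻¹) * Q *
    Matrix.diagonal (fun i => (Real.sqrt (Q i i))⁻¹)

lemma e2_nonneg {m : ℕ} (x : Fin m → ℝ) : 0 ≤ e2 x := Real.sqrt_nonneg _

lemma e2_zero {m : ℕ} : e2 (0 : Fin m → ℝ) = 0 := by simp [e2]

lemma e2_pos {m : ℕ} {x : Fin m → ℝ} (hx : x ≠ 0) : 0 < e2 x := by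
  have h : 0 < ∑ i, x i ^ 2 := by
    obtain ⟨i, hi⟩ := Function.ne_iff.mp hx
    exact Finset.sum_pos' (fun j _ => sq_nonneg _) ⟨i, Finset.mem_univ i, pow_pos (abs_pos.mpr hi) 2 |>.trans_le (by rw [sq_abs])⟩
  exact Real.sqrt_pos.mpr h

lemma e2_add_le {m : ℕ} (x y : Fin m → ℝ) : e2 (x + y) ≤ e2 x + e2 y := by
  have hx : e2 x = ‖(WithLp.equiv 2 (Fin m → ℝ)).symm x‖ := by
    rw [EuclideanSpace.norm_eq]; simp [e2, Real.norm_eq_abs, sq_abs]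
  have hy : e2 y = ‖(WithLp.equiv 2 (Fin m → ℝ)).symm y‖ := by
    rw [EuclideanSpace.norm_eq]; simp [e2, Real.norm_eq_abs, sq_abs]
  have hxy : e2 (x + y) = ‖(WithLp.equiv 2 (Fin m → ℝ)).symm x
      + (WithLp.equiv 2 (Fin m → ℝ)).symm y‖ := by
    rw [EuclideanSpace.norm_eq]; simp [e2, Real.norm_eq_abs, sq_abs]
  rw [hx, hy, hxy]; exact norm_add_le _ _

noncomputable def frob {m : ℕ} (M : Matrix (Fin m) (Fin m) ℝ) : ℝ :=
  Real.sqrt (∑ i, ∑ j, M i j ^ 2)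

lemma frob_nonneg {m : ℕ} (M : Matrix (Fin m) (Fin m) ℝ) : 0 ≤ frob M := Real.sqrt_nonneg _

lemma e2_mulVec_le_frob {m : ℕ} (M : Matrix (Fin m) (Fin m) ℝ) (x : Fin m → ℝ) :
    e2 (M *ᵥ x) ≤ frob M * e2 x := by
  rw [e2, e2, frob, ← Real.sqrt_mul (by positivity)]
  apply Real.sqrt_le_sqrt
  rw [Finset.sum_mul]
  apply Finset.sum_le_sum
  intro i _
  calc (M *ᵥ x) i ^ 2 = (∑ j, M i j * x j) ^ 2 := by rfl
    _ ≤ (∑ j, M i j ^ 2) * ∑ j, x j ^ 2 := Finset.sum_mul_sq_le_sq_mul_sq _ _ _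

lemma specNorm_le {m : ℕ} {M : Matrix (Fin m) (Fin m) ℝ} {C : ℝ} (hC : 0 ≤ C)
    (h : ∀ x, e2 (M *ᵥ x) ≤ C * e2 x) : specNorm M ≤ C := by
  apply Real.sSup_le _ hC
  rintro r ⟨x, hx, rfl⟩
  rw [div_le_iff₀ (e2_pos hx)]
  exact h x

lemma specNorm_nonneg {m : ℕ} (M : Matrix (Fin m) (Fin m) ℝ) : 0 ≤ specNorm M := by
  apply Real.sSup_nonneg
  rintro r ⟨x, hx, rfl⟩
  exact div_nonneg (e2_nonneg _) (e2_nonneg _)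

lemma le_specNorm {m : ℕ} (M : Matrix (Fin m) (Fin m) ℝ) {x : Fin m → ℝ} (hx : x ≠ 0) :
    e2 (M *ᵥ x) / e2 x ≤ specNorm M := by
  apply le_csSup
  · refine ⟨frob M, ?_⟩
    rintro r ⟨y, hy, rfl⟩
    rw [div_le_iff₀ (e2_pos hy)]
    exact e2_mulVec_le_frob M y
  · exact ⟨x, hx, rfl⟩

lemma e2_mulVec_le_specNorm {m : ℕ} (M : Matrix (Fin m) (Fin m) ℝ) (x : Fin m → ℝ) :
    e2 (M *ᵥ x) ≤ specNorm M * e2 x := by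
  by_cases hx : x = 0
  · simp [hx, e2_zero, Matrix.mulVec_zero]
  · rw [← div_le_iff₀ (e2_pos hx)] at *
    exact le_specNorm M hx

lemma abs_entry_le_specNorm {m : ℕ} (M : Matrix (Fin m) (Fin m) ℝ) (i j : Fin m) :
    |M i j| ≤ specNorm M := by
  have hx : (Pi.single j 1 : Fin m → ℝ) ≠ 0 := by
    intro h
    have := congrFun h j
    simp at this
  have h1 : e2 (Pi.single j 1 : Fin m → ℝ) = 1 := by
    rw [e2]
    rw [show (∑ k, (Pi.single j 1 : Fin m → ℝ) k ^ 2) = 1 from by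
      rw [Finset.sum_eq_single j] <;> simp +contextual [Pi.single_apply]]
    exact Real.sqrt_one
  have h2 : |M i j| ≤ e2 (M *ᵥ Pi.single j 1) := by
    rw [e2, Matrix.mulVec_single]
    rw [← Real.sqrt_sq_eq_abs]
    apply Real.sqrt_le_sqrt
    simpa using Finset.single_le_sum (f := fun k => (M k j * 1) ^ 2)
      (fun k _ => sq_nonneg _) (Finset.mem_univ i)
  calc |M i j| ≤ e2 (M *ᵥ Pi.single j 1) / e2 (Pi.single j 1) := by rw [h1]; simpa using h2
    _ ≤ specNorm M := le_specNorm M hx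

lemma key_scalar {c t u v u' v' : ℝ} (hc : 0 < c) (ht : 0 ≤ t)
    (hu : c ≤ u) (hv : c ≤ v) (hu' : c ≤ u') (hv' : c ≤ v')
    (h1 : |u - u'| ≤ t * c) (h2 : |v - v'| ≤ t * c) :
    Real.sqrt (u' * v') * |(Real.sqrt (u * v))⁻¹ - (Real.sqrt (u' * v'))⁻¹| ≤ t := by
  have hu0 : 0 < u := hc.trans_le hu
  have hv0 : 0 < v := hc.trans_le hv
  have hu'0 : 0 < u' := hc.trans_le hu'
  have hv'0 : 0 < v' := hc.trans_le hv'
  have ha : 0 < Real.sqrt (u * v) := Real.sqrt_pos.mpr (by positivity)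
  have hb : 0 < Real.sqrt (u' * v') := Real.sqrt_pos.mpr (by positivity)
  obtain ⟨h1l, h1r⟩ := abs_le.mp h1
  obtain ⟨h2l, h2r⟩ := abs_le.mp h2
  have htc : t * c ≤ t * u := mul_le_mul_of_nonneg_left hu ht
  have htc' : t * c ≤ t * v := mul_le_mul_of_nonneg_left hv ht
  have hupper : Real.sqrt (u' * v') ≤ (1 + t) * Real.sqrt (u * v) := by
    rw [show (1 + t) * Real.sqrt (u * v) = Real.sqrt ((1 + t) ^ 2 * (u * v)) from by
      rw [Real.sqrt_mul (sq_nonneg _), Real.sqrt_sq (by linarith)]]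
    apply Real.sqrt_le_sqrt
    have hA : u' ≤ (1 + t) * u := by nlinarith
    have hB : v' ≤ (1 + t) * v := by nlinarith
    calc u' * v' ≤ ((1 + t) * u) * ((1 + t) * v) :=
          mul_le_mul hA hB hv'0.le (by positivity)
      _ = (1 + t) ^ 2 * (u * v) := by ring
  have hlower : (1 - t) * Real.sqrt (u * v) ≤ Real.sqrt (u' * v') := by
    rcases le_or_gt 1 t with h | h
    · calc (1 - t) * Real.sqrt (u * v) ≤ 0 := mul_nonpos_of_nonpos_of_nonneg (by linarith) ha.le
        _ ≤ _ := hb.le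
    · have h1t : (0:ℝ) < 1 - t := by linarith
      rw [show (1 - t) * Real.sqrt (u * v) = Real.sqrt ((1 - t) ^ 2 * (u * v)) from by
        rw [Real.sqrt_mul (sq_nonneg _), Real.sqrt_sq h1t.le]]
      apply Real.sqrt_le_sqrt
      have hA : (1 - t) * u ≤ u' := by nlinarith
      have hB : (1 - t) * v ≤ v' := by nlinarith
      calc (1 - t) ^ 2 * (u * v) = ((1 - t) * u) * ((1 - t) * v) := by ring
        _ ≤ u' * v' := mul_le_mul hA hB (by positivity) hu'0.le
  have heq : Real.sqrt (u' * v') * |(Real.sqrt (u * v))⁻¹ - (Real.sqrt (u' * v'))⁻¹|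
      = |Real.sqrt (u' * v') / Real.sqrt (u * v) - 1| := by
    have hmm : Real.sqrt (u' * v') * ((Real.sqrt (u * v))⁻¹ - (Real.sqrt (u' * v'))⁻¹)
        = Real.sqrt (u' * v') / Real.sqrt (u * v) - 1 := by
      field_simp
    rw [← hmm, abs_mul, abs_of_pos hb]
  rw [heq, abs_le]
  constructor
  · have : (1 - t) ≤ Real.sqrt (u' * v') / Real.sqrt (u * v) :=
      (le_div_iff₀ ha).mpr hlower
    linarith
  · have : Real.sqrt (u' * v') / Real.sqrt (u * v) ≤ 1 + t :=
      (div_le_iff₀ ha).mpr (by linarith [hupper])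
    linarith

lemma psd_entry_sq_le {m : ℕ} {Q : Matrix (Fin m) (Fin m) ℝ} (hQ : Q.PosSemidef)
    (i j : Fin m) (hjj : 0 < Q j j) : Q i j ^ 2 ≤ Q i i * Q j j := by
  have hsym : Q j i = Q i j := by
    have := congrFun (congrFun hQ.1 i) j
    simpa [Matrix.conjTranspose_apply] using this
  have h0 := hQ.dotProduct_mulVec_nonneg (Pi.single i (Q j j) + Pi.single j (-(Q i j)))
  have hexp : (star (Pi.single i (Q j j) + Pi.single j (-(Q i j))) ⬝ᵥ
      (Q *ᵥ (Pi.single i (Q j j) + Pi.single j (-(Q i j)))))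
      = Q j j * (Q i i * Q j j + Q i j * (-(Q i j)))
        + (-(Q i j)) * (Q j i * Q j j + Q j j * (-(Q i j))) := by
    simp [Matrix.mulVec_add, Matrix.mulVec_single, add_dotProduct, single_dotProduct]
    ring
  rw [hexp, hsym] at h0
  nlinarith [h0, hjj, mul_pos hjj hjj]

lemma e2_diag_mulVec_le {m : ℕ} {d : Fin m → ℝ} {c : ℝ} (hc : 0 ≤ c)
    (hd : ∀ i, |d i| ≤ c) (x : Fin m → ℝ) :
    e2 (Matrix.diagonal d *ᵥ x) ≤ c * e2 x := by
  rw [e2, e2, show c * Real.sqrt (∑ i, x i ^ 2) = Real.sqrt (c ^ 2 * ∑ i, x i ^ 2) from by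
    rw [Real.sqrt_mul (sq_nonneg _), Real.sqrt_sq hc]]
  apply Real.sqrt_le_sqrt
  rw [Finset.mul_sum]
  apply Finset.sum_le_sum
  intro i _
  have : (Matrix.diagonal d *ᵥ x) i = d i * x i := by
    simp [Matrix.mulVec_diagonal]
  rw [this, mul_pow]
  have h1 : d i ^ 2 ≤ c ^ 2 := by
    rw [← sq_abs (d i)]
    exact pow_le_pow_left₀ (abs_nonneg _) (hd i) 2
  exact mul_le_mul_of_nonneg_right h1 (sq_nonneg _)

lemma frob_le_of_entries {m : ℕ} {M : Matrix (Fin m) (Fin m) ℝ} {B : ℝ} (hB : 0 ≤ B)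
    (h : ∀ i j, |M i j| ≤ B) : frob M ≤ m * B := by
  rw [frob, show (m : ℝ) * B = Real.sqrt ((m * B) ^ 2) from
    (Real.sqrt_sq (by positivity)).symm]
  apply Real.sqrt_le_sqrt
  calc ∑ i, ∑ j, M i j ^ 2 ≤ ∑ _i : Fin m, ∑ _j : Fin m, B ^ 2 := by
        apply Finset.sum_le_sum; intro i _
        apply Finset.sum_le_sum; intro j _
        rw [← sq_abs]
        exact pow_le_pow_left₀ (abs_nonneg _) (h i j) 2
    _ = m * m * B ^ 2 := by simp [Finset.sum_const]; ring
    _ ≤ (m * B) ^ 2 := by ring_nf; exact le_refl _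

/-- If `Q, Q̃` are real symmetric positive definite with all diagonal
entries at least `C_q > 0`, and `R, R̃` are the associated correlation matrices, then
`‖R − R̃‖_s ≤ ((2m+1)/C_q) ‖Q − Q̃‖_s`. -/
theorem stmt6 (m : ℕ) (Cq : ℝ) (hCq : 0 < Cq)
    (Q Q' : Matrix (Fin m) (Fin m) ℝ) (hQ : Q.PosDef) (hQ' : Q'.PosDef)
    (hdQ : ∀ i, Cq ≤ Q i i) (hdQ' : ∀ i, Cq ≤ Q' i i) :
    specNorm (corr Q - corr Q') ≤ ((2 * m + 1) / Cq) * specNorm (Q - Q') := by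
  set δ := specNorm (Q - Q') with hδdef
  have hδ0 : 0 ≤ δ := specNorm_nonneg _
  have hdiag : ∀ i, |Q i i - Q' i i| ≤ δ := fun i => by
    simpa [Matrix.sub_apply] using abs_entry_le_specNorm (Q - Q') i i
  set d : Fin m → ℝ := fun i => (Real.sqrt (Q i i))⁻¹ with hd
  set d' : Fin m → ℝ := fun i => (Real.sqrt (Q' i i))⁻¹ with hd'
  have hQpos : ∀ i, 0 < Q i i := fun i => hCq.trans_le (hdQ i)
  have hQ'pos : ∀ i, 0 < Q' i i := fun i => hCq.trans_le (hdQ' i)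
  have hsCq : 0 < Real.sqrt Cq := Real.sqrt_pos.mpr hCq
  have hdb : ∀ i, |d i| ≤ (Real.sqrt Cq)⁻¹ := fun i => by
    rw [hd, abs_of_nonneg (by positivity)]
    exact inv_anti₀ hsCq (Real.sqrt_le_sqrt (hdQ i))
  set A := Matrix.diagonal d * (Q - Q') * Matrix.diagonal d with hA
  set S := Matrix.of (fun i j => Q' i j * (d i * d j - d' i * d' j)) with hS
  have hdecomp : corr Q - corr Q' = A + S := by
    ext i j
    simp only [corr, hA, hS, Matrix.sub_apply, Matrix.add_apply, Matrix.mul_diagonal,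
      Matrix.diagonal_mul, Matrix.of_apply, hd, hd']
    ring
  -- pointwise bound for A
  have hAx : ∀ x, e2 (A *ᵥ x) ≤ δ / Cq * e2 x := by
    intro x
    have h1 : A *ᵥ x = Matrix.diagonal d *ᵥ ((Q - Q') *ᵥ (Matrix.diagonal d *ᵥ x)) := by
      rw [Matrix.mulVec_mulVec, Matrix.mulVec_mulVec, hA]
    rw [h1]
    calc e2 (Matrix.diagonal d *ᵥ ((Q - Q') *ᵥ (Matrix.diagonal d *ᵥ x)))
        ≤ (Real.sqrt Cq)⁻¹ * e2 ((Q - Q') *ᵥ (Matrix.diagonal d *ᵥ x)) :=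
          e2_diag_mulVec_le (by positivity) hdb _
      _ ≤ (Real.sqrt Cq)⁻¹ * (δ * e2 (Matrix.diagonal d *ᵥ x)) := by
          apply mul_le_mul_of_nonneg_left _ (by positivity)
          exact e2_mulVec_le_specNorm _ _
      _ ≤ (Real.sqrt Cq)⁻¹ * (δ * ((Real.sqrt Cq)⁻¹ * e2 x)) := by
          apply mul_le_mul_of_nonneg_left _ (by positivity)
          exact mul_le_mul_of_nonneg_left (e2_diag_mulVec_le (by positivity) hdb x) hδ0
      _ = δ / Cq * e2 x := by
          rw [show Cq = Real.sqrt Cq * Real.sqrt Cq from (Real.mul_self_sqrt hCq.le).symm]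
          field_simp
          rw [Real.sqrt_sq hsCq.le]
  -- entry bound for S
  have hSentry : ∀ i j, |S i j| ≤ δ / Cq := by
    intro i j
    have habs : |Q' i j| ≤ Real.sqrt (Q' i i * Q' j j) := by
      rw [← Real.sqrt_sq_eq_abs]
      exact Real.sqrt_le_sqrt (psd_entry_sq_le hQ'.posSemidef i j (hQ'pos j))
    have hddd : d i * d j = (Real.sqrt (Q i i * Q j j))⁻¹ := by
      rw [hd, Real.sqrt_mul (hQpos i).le, mul_inv]
    have hddd' : d' i * d' j = (Real.sqrt (Q' i i * Q' j j))⁻¹ := by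
      rw [hd', Real.sqrt_mul (hQ'pos i).le, mul_inv]
    calc |S i j| = |Q' i j| * |d i * d j - d' i * d' j| := by
          rw [hS]; exact abs_mul _ _
      _ ≤ Real.sqrt (Q' i i * Q' j j) * |d i * d j - d' i * d' j| :=
          mul_le_mul_of_nonneg_right habs (abs_nonneg _)
      _ = Real.sqrt (Q' i i * Q' j j) *
            |(Real.sqrt (Q i i * Q j j))⁻¹ - (Real.sqrt (Q' i i * Q' j j))⁻¹| := by
          rw [hddd, hddd']
      _ ≤ δ / Cq := by
          apply key_scalar hCq (by positivity) (hdQ i) (hdQ j) (hdQ' i) (hdQ' j)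
          · rw [div_mul_cancel₀ _ (ne_of_gt hCq)]; exact hdiag i
          · rw [div_mul_cancel₀ _ (ne_of_gt hCq)]; exact hdiag j
  have hSfrob : frob S ≤ m * (δ / Cq) := frob_le_of_entries (by positivity) hSentry
  -- combine
  have hfinal : specNorm (corr Q - corr Q') ≤ δ / Cq + m * (δ / Cq) := by
    apply specNorm_le (by positivity)
    intro x
    rw [hdecomp, Matrix.add_mulVec]
    calc e2 (A *ᵥ x + S *ᵥ x) ≤ e2 (A *ᵥ x) + e2 (S *ᵥ x) := e2_add_le _ _
      _ ≤ δ / Cq * e2 x + frob S * e2 x := add_le_add (hAx x) (e2_mulVec_le_frob S x)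
      _ ≤ δ / Cq * e2 x + m * (δ / Cq) * e2 x := by
          apply add_le_add_right
          exact mul_le_mul_of_nonneg_right hSfrob (e2_nonneg _)
      _ = (δ / Cq + m * (δ / Cq)) * e2 x := by ring
  calc specNorm (corr Q - corr Q') ≤ δ / Cq + m * (δ / Cq) := hfinal
    _ = (m + 1) / Cq * δ := by ring
    _ ≤ (2 * m + 1) / Cq * δ := by
        gcongr
        linarith [Nat.cast_nonneg (α := ℝ) m]
end

section
/- Let ν ≥ 1, let m^{(1)}, …, m^{(ν)} be real numbers with ∑_{k=1}^{ν} (m^{(k)})² < 1, let W be an m×m real symmetric positive definite matrix, and let (Q_t)_{t∈ℤ} and (S_t)_{t∈ℤ} be families of m×m real symmetric positive semidefinite matrices indexed by the integers such that Q_t = W + ∑_{k=1}^{ν} (m^{(k)})² Q_{t−k} + S_t for every t ∈ ℤ. Then for every t ∈ ℤ, the smallest eigenvalue of Q_t is at least λ₁(W) / (1 − ∑_{k=1}^{ν} (m^{(k)})²), and the i-th diagonal entry of Q_t is at least W_{ii} / (1 − ∑_{k=1}^{ν} (m^{(k)})²) for every i. -/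
open Matrix Pointwise

/-- recursion lemma -/
lemma auxRec {ν : ℕ} (c : Fin ν → ℝ) (hsum : ∑ k, (c k) ^ 2 < 1)
    (w : ℝ) (f : ℤ → ℝ) (hf0 : ∀ t, 0 ≤ f t)
    (hrec : ∀ t : ℤ, w + ∑ k : Fin ν, (c k) ^ 2 * f (t - ((k : ℕ) + 1 : ℤ)) ≤ f t) :
    ∀ t, w / (1 - ∑ k, (c k) ^ 2) ≤ f t := by
  set s := ∑ k, (c k) ^ 2 with hs
  have hs0 : 0 ≤ s := Finset.sum_nonneg fun k _ => sq_nonneg _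
  have h1s : 0 < 1 - s := by linarith
  have hne : (Set.range f).Nonempty := ⟨f 0, Set.mem_range_self 0⟩
  have hbdd : BddBelow (Set.range f) := ⟨0, by rintro x ⟨t, rfl⟩; exact hf0 t⟩
  set α := sInf (Set.range f) with hα
  have hαle : ∀ t, α ≤ f t := fun t => csInf_le hbdd (Set.mem_range_self t)
  have hkey : w + s * α ≤ α := by
    apply le_csInf hne
    rintro x ⟨t, rfl⟩
    calc w + s * α = w + ∑ k : Fin ν, (c k) ^ 2 * α := by rw [hs, Finset.sum_mul]
    _ ≤ w + ∑ k : Fin ν, (c k) ^ 2 * f (t - ((k : ℕ) + 1 : ℤ)) := by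
        refine add_le_add_right (Finset.sum_le_sum fun k _ => ?_) w
        exact mul_le_mul_of_nonneg_left (hαle _) (sq_nonneg _)
    _ ≤ f t := hrec t
  intro t
  have : w / (1 - s) ≤ α := by
    rw [div_le_iff₀ h1s]
    nlinarith
  exact this.trans (hαle t)

lemma psd_smul {m : ℕ} {A : Matrix (Fin m) (Fin m) ℝ} (hA : A.PosSemidef) {r : ℝ}
    (hr : 0 ≤ r) : (r • A).PosSemidef := by
  refine ⟨?_, fun x => ?_⟩
  · unfold Matrix.IsHermitian
    rw [conjTranspose_smul, hA.1]
    simp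
  · exact (hA.smul hr).2 x

/-- characterization of lower bound on the spectrum -/
lemma psd_sub_iff {m : ℕ} {A : Matrix (Fin m) (Fin m) ℝ} (hA : A.IsHermitian) (r : ℝ) :
    (A - r • (1 : Matrix (Fin m) (Fin m) ℝ)).PosSemidef ↔ ∀ x ∈ spectrum ℝ A, r ≤ x := by
  have halg : (algebraMap ℝ (Matrix (Fin m) (Fin m) ℝ)) r = r • 1 := by
    simp [Algebra.algebraMap_eq_smul_one]
  have hspec : spectrum ℝ (A - r • (1 : Matrix (Fin m) (Fin m) ℝ))
      = spectrum ℝ A - ({r} : Set ℝ) := by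
    rw [← halg, ← spectrum.sub_singleton_eq]
  have hherm : (A - r • (1 : Matrix (Fin m) (Fin m) ℝ)).IsHermitian := by
    apply hA.sub
    unfold Matrix.IsHermitian
    rw [conjTranspose_smul, Matrix.conjTranspose_one]
    simp
  constructor
  · intro hpsd x hx
    have hx' : x - r ∈ spectrum ℝ (A - r • (1 : Matrix (Fin m) (Fin m) ℝ)) := by
      rw [hspec]
      exact Set.sub_mem_sub hx rfl
    rw [hherm.spectrum_real_eq_range_eigenvalues] at hx'
    obtain ⟨i, hi⟩ := hx'
    have := hpsd.eigenvalues_nonneg i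
    -- hpsd.1 vs hherm defeq? eigenvalues depends on proof... use hi
    rw [show hpsd.1 = hherm from rfl] at this
    linarith [hi ▸ this]
  · intro h
    apply hherm.posSemidef_iff_eigenvalues_nonneg.mpr
    intro i
    show (0 : ℝ) ≤ _
    have : hherm.eigenvalues i ∈ spectrum ℝ (A - r • (1 : Matrix (Fin m) (Fin m) ℝ)) :=
      hherm.eigenvalues_mem_spectrum_real i
    rw [hspec] at this
    obtain ⟨x, hx, y, hy, hxy⟩ := this
    rw [Set.mem_singleton_iff] at hy
    subst hy
    have := h x hx
    change x - y = _ at hxy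
    linarith

lemma algId {m ν : ℕ} (W Sm : Matrix (Fin m) (Fin m) ℝ) (a : Fin ν → ℝ)
    (G : Fin ν → Matrix (Fin m) (Fin m) ℝ) (w : ℝ) (φ : Fin ν → ℝ) :
    (W + ∑ k, a k • G k + Sm) - (w + ∑ k, a k * φ k) • (1 : Matrix (Fin m) (Fin m) ℝ)
      = (W - w • 1) + (∑ k, a k • (G k - φ k • 1)) + Sm := by
  simp only [smul_sub, Finset.sum_sub_distrib, add_smul, Finset.sum_smul, mul_smul]
  abel

set_option maxHeartbeats 1000000 in
/-- Let `∑_k (m^{(k)})² < 1`, let `W` be positive definite, and let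
`(Q_t)_{t∈ℤ}`, `(S_t)_{t∈ℤ}` be positive semidefinite matrices with
`Q_t = W + ∑_{k=1}^ν (m^{(k)})² Q_{t−k} + S_t` for all `t`.  Then for every `t`, the
smallest eigenvalue of `Q_t` (the infimum of its real spectrum) is at least
`λ₁(W)/(1 − ∑_k (m^{(k)})²)` and `(Q_t)_{ii} ≥ W_{ii}/(1 − ∑_k (m^{(k)})²)` for every `i`. -/
theorem stmt11 (m ν : ℕ) (hν : 1 ≤ ν) (c : Fin ν → ℝ) (hsum : ∑ k, (c k) ^ 2 < 1)
    (W : Matrix (Fin m) (Fin m) ℝ) (hW : W.PosDef)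
    (Q S : ℤ → Matrix (Fin m) (Fin m) ℝ)
    (hQ : ∀ t, (Q t).PosSemidef) (hS : ∀ t, (S t).PosSemidef)
    (hrec : ∀ t : ℤ, Q t = W + ∑ k : Fin ν, (c k) ^ 2 • Q (t - ((k : ℕ) + 1 : ℤ)) + S t) :
    ∀ t : ℤ,
      sInf (spectrum ℝ W) / (1 - ∑ k, (c k) ^ 2) ≤ sInf (spectrum ℝ (Q t)) ∧
      ∀ i, W i i / (1 - ∑ k, (c k) ^ 2) ≤ Q t i i := by
  set s := ∑ k, (c k) ^ 2 with hs
  have hs0 : 0 ≤ s := Finset.sum_nonneg fun k _ => sq_nonneg _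
  -- diagonal entries of psd are nonneg
  have hdiag : ∀ (A : Matrix (Fin m) (Fin m) ℝ), A.PosSemidef → ∀ i, 0 ≤ A i i := by
    intro A hA i
    exact hA.diag_nonneg
  -- part 2: diagonal
  have part2 : ∀ i t, W i i / (1 - s) ≤ Q t i i := by
    intro i
    apply auxRec c hsum
    · intro t; exact hdiag _ (hQ t) i
    · intro t
      have h1 : Q t i i = W i i + (∑ k : Fin ν, (c k) ^ 2 * Q (t - ((k : ℕ) + 1 : ℤ)) i i)
          + S t i i := by
        rw [hrec t]
        simp [Matrix.add_apply, Matrix.sum_apply, Matrix.smul_apply]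
      rw [h1]
      have := hdiag _ (hS t) i
      linarith
  -- part 1: smallest eigenvalue
  rcases Nat.eq_zero_or_pos m with hm | hm
  · subst hm
    have hempty : ∀ (A : Matrix (Fin 0) (Fin 0) ℝ), spectrum ℝ A = ∅ := by
      intro A
      exact Set.eq_empty_of_forall_notMem fun x hx =>
        (spectrum.mem_iff.mp hx) (isUnit_of_subsingleton _)
    intro t
    refine ⟨?_, fun i => part2 i t⟩
    rw [hempty, hempty, Real.sInf_empty]
    simp
  · haveI : Nonempty (Fin m) := ⟨⟨0, hm⟩⟩
    have hne : ∀ (A : Matrix (Fin m) (Fin m) ℝ), A.IsHermitian → (spectrum ℝ A).Nonempty := by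
      intro A hA
      rw [hA.spectrum_real_eq_range_eigenvalues]
      exact Set.range_nonempty _
    have hbdd : ∀ (A : Matrix (Fin m) (Fin m) ℝ), BddBelow (spectrum ℝ A) := fun A =>
      Set.Finite.bddBelow (Matrix.finite_real_spectrum (A := A))
    -- lower bound characterizations
    have hmono : ∀ (A : Matrix (Fin m) (Fin m) ℝ) (hA : A.IsHermitian) (r : ℝ),
        (A - r • (1 : Matrix (Fin m) (Fin m) ℝ)).PosSemidef → r ≤ sInf (spectrum ℝ A) := by
      intro A hA r hpsd
      exact le_csInf (hne A hA) ((psd_sub_iff hA r).mp hpsd)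
    have hconv : ∀ (A : Matrix (Fin m) (Fin m) ℝ) (hA : A.IsHermitian),
        (A - sInf (spectrum ℝ A) • (1 : Matrix (Fin m) (Fin m) ℝ)).PosSemidef := by
      intro A hA
      exact (psd_sub_iff hA _).mpr fun x hx => csInf_le (hbdd A) hx
    set f : ℤ → ℝ := fun t => sInf (spectrum ℝ (Q t)) with hf
    have hf0 : ∀ t, 0 ≤ f t := by
      intro t
      apply hmono _ (hQ t).1
      simpa using hQ t
    have hstep : ∀ t : ℤ, sInf (spectrum ℝ W)
        + ∑ k : Fin ν, (c k) ^ 2 * f (t - ((k : ℕ) + 1 : ℤ)) ≤ f t := by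
      intro t
      apply hmono _ (hQ t).1
      have heq : Q t - (sInf (spectrum ℝ W)
            + ∑ k : Fin ν, (c k) ^ 2 * f (t - ((k : ℕ) + 1 : ℤ))) • (1 : Matrix (Fin m) (Fin m) ℝ)
          = (W - sInf (spectrum ℝ W) • 1)
            + (∑ k : Fin ν, (c k) ^ 2 •
                (Q (t - ((k : ℕ) + 1 : ℤ)) - f (t - ((k : ℕ) + 1 : ℤ)) • 1))
            + S t := by
        rw [hrec t]
        exact algId W (S t) (fun k => (c k) ^ 2) (fun k => Q (t - ((k : ℕ) + 1 : ℤ)))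
          (sInf (spectrum ℝ W)) (fun k => f (t - ((k : ℕ) + 1 : ℤ)))
      rw [heq]
      have hsumpsd : (∑ k : Fin ν, (c k) ^ 2 •
          (Q (t - ((k : ℕ) + 1 : ℤ)) - f (t - ((k : ℕ) + 1 : ℤ)) • 1)).PosSemidef := by
        apply Finset.sum_induction _ _ (fun a b ha hb => ha.add hb) Matrix.PosSemidef.zero
        intro k _
        exact psd_smul (hconv _ (hQ _).1) (sq_nonneg _)
      exact ((hconv W hW.1).add hsumpsd).add (hS t)
    intro t
    exact ⟨auxRec c hsum _ f hf0 hstep t, fun i => part2 i t⟩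
end
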